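/- Let l_Δ ≤ 0 ≤ u_Δ with l_Δ < u_Δ, let l_x ≤ u_x and l_y ≤ u_y be real numbers, and let σ : ℝ → ℝ be differentiable on [min(l_x, l_y), max(u_x, u_y)] with ∂_l ≤ σ′(t) ≤ ∂_u for all t in that interval. Define α_l = (∂_l·u_Δ − ∂_u·l_Δ)/(u_Δ − l_Δ), α_u = (∂_u·u_Δ − ∂_l·l_Δ)/(u_Δ − l_Δ), and β_l = −β_u = (∂_u − ∂_l)·l_Δ·u_Δ/(u_Δ − l_Δ). Then for all x ∈ [l_x, u_x] and all Δ ∈ [l_Δ, u_Δ] with x − Δ ∈ [l_y, u_y], one has α_l·Δ + β_l ≤ σ(x) − σ(x − Δ) ≤ α_u·Δ + β_u. -/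

import Mathlib

/-- **RaVeN relaxation (Lemma).** Linear (in `Δ`) lower and upper bounds for
`σ x - σ (x - Δ)` for an activation function `σ` with derivative bounds
`∂l ≤ σ' ≤ ∂u` over the hull of the intervals `[lx, ux]` and `[ly, uy]`,
in the case `lΔ ≤ 0 ≤ uΔ`. -/
theorem raven_relaxation
    (lΔ uΔ lx ux ly uy dl du : ℝ)
    (σ σ' : ℝ → ℝ)
    (hlΔ : lΔ ≤ 0) (huΔ : 0 ≤ uΔ) (hΔ : lΔ < uΔ)
    (hx : lx ≤ ux) (hy : ly ≤ uy)
    (hdiff : ∀ t ∈ Set.Icc (min lx ly) (max ux uy), HasDerivAt σ (σ' t) t)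
    (hderiv : ∀ t ∈ Set.Icc (min lx ly) (max ux uy), dl ≤ σ' t ∧ σ' t ≤ du)
    (αl αu βl βu : ℝ)
    (hαl : αl = (dl * uΔ - du * lΔ) / (uΔ - lΔ))
    (hαu : αu = (du * uΔ - dl * lΔ) / (uΔ - lΔ))
    (hβl : βl = (du - dl) * lΔ * uΔ / (uΔ - lΔ))
    (hβu : βu = -((du - dl) * lΔ * uΔ / (uΔ - lΔ))) :
    ∀ x ∈ Set.Icc lx ux, ∀ Δ ∈ Set.Icc lΔ uΔ, x - Δ ∈ Set.Icc ly uy →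
      αl * Δ + βl ≤ σ x - σ (x - Δ) ∧ σ x - σ (x - Δ) ≤ αu * Δ + βu := by
  intro x hxmem Δ hΔmem hymem
  obtain ⟨hx1, hx2⟩ := hxmem
  obtain ⟨hΔ1, hΔ2⟩ := hΔmem
  obtain ⟨hy1, hy2⟩ := hymem
  have hxin : x ∈ Set.Icc (min lx ly) (max ux uy) :=
    ⟨le_trans (min_le_left _ _) hx1, le_trans hx2 (le_max_left _ _)⟩
  have hyin : x - Δ ∈ Set.Icc (min lx ly) (max ux uy) :=
    ⟨le_trans (min_le_right _ _) hy1, le_trans hy2 (le_max_right _ _)⟩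
  -- Step 1: exists m ∈ [dl, du] with σ x - σ (x - Δ) = m * Δ
  have key : ∃ m, dl ≤ m ∧ m ≤ du ∧ σ x - σ (x - Δ) = m * Δ := by
    have hsub : ∀ a b : ℝ, a ∈ Set.Icc (min lx ly) (max ux uy) →
        b ∈ Set.Icc (min lx ly) (max ux uy) → Set.Icc a b ⊆ Set.Icc (min lx ly) (max ux uy) := by
      intro a b ha hb t ht
      exact ⟨le_trans ha.1 ht.1, le_trans ht.2 hb.2⟩
    rcases lt_trichotomy Δ 0 with h0 | h0 | h0
    · -- x < x - Δ
      have hlt : x < x - Δ := by linarith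
      have hIcc : Set.Icc x (x - Δ) ⊆ Set.Icc (min lx ly) (max ux uy) := hsub _ _ hxin hyin
      obtain ⟨c, hc, hcd⟩ := exists_hasDerivAt_eq_slope σ σ' hlt
        (ContinuousOn.mono (fun t ht => (hdiff t (hIcc ht)).continuousAt.continuousWithinAt)
          (le_refl _))
        (fun t ht => hdiff t (hIcc (Set.Ioo_subset_Icc_self ht)))
      have hcmem := hderiv c (hIcc (Set.Ioo_subset_Icc_self hc))
      refine ⟨σ' c, hcmem.1, hcmem.2, ?_⟩
      rw [eq_div_iff (by intro h; apply absurd h; intro h2; nlinarith : x - Δ - x ≠ 0)] at hcd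
      linear_combination hcd
    · exact ⟨σ' x, (hderiv x hxin).1, (hderiv x hxin).2, by rw [h0]; simp⟩
    · -- x - Δ < x
      have hlt : x - Δ < x := by linarith
      have hIcc : Set.Icc (x - Δ) x ⊆ Set.Icc (min lx ly) (max ux uy) := hsub _ _ hyin hxin
      obtain ⟨c, hc, hcd⟩ := exists_hasDerivAt_eq_slope σ σ' hlt
        (ContinuousOn.mono (fun t ht => (hdiff t (hIcc ht)).continuousAt.continuousWithinAt)
          (le_refl _))
        (fun t ht => hdiff t (hIcc (Set.Ioo_subset_Icc_self ht)))
      have hcmem := hderiv c (hIcc (Set.Ioo_subset_Icc_self hc))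
      refine ⟨σ' c, hcmem.1, hcmem.2, ?_⟩
      rw [eq_div_iff (by intro h; apply absurd h; intro h2; nlinarith : x - (x - Δ) ≠ 0)] at hcd
      linear_combination -hcd
  obtain ⟨m, hm1, hm2, heq⟩ := key
  rw [heq]
  have hpos : (0 : ℝ) < uΔ - lΔ := by linarith
  have h1 : 0 ≤ (du - m) * uΔ * (Δ - lΔ) :=
    mul_nonneg (mul_nonneg (by linarith) huΔ) (by linarith)
  have h2 : 0 ≤ (m - dl) * lΔ * (Δ - uΔ) := by
    nlinarith [mul_nonneg (mul_nonneg (show (0:ℝ) ≤ m - dl by linarith)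
      (show (0:ℝ) ≤ -lΔ by linarith)) (show (0:ℝ) ≤ uΔ - Δ by linarith)]
  have h3 : 0 ≤ (m - dl) * uΔ * (Δ - lΔ) :=
    mul_nonneg (mul_nonneg (by linarith) huΔ) (by linarith)
  have h4 : 0 ≤ (du - m) * lΔ * (Δ - uΔ) := by
    nlinarith [mul_nonneg (mul_nonneg (show (0:ℝ) ≤ du - m by linarith)
      (show (0:ℝ) ≤ -lΔ by linarith)) (show (0:ℝ) ≤ uΔ - Δ by linarith)]
  constructor
  · rw [hαl, hβl, div_mul_eq_mul_div, ← add_div, div_le_iff₀ hpos]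
    nlinarith
  · rw [hαu, hβu, ← sub_eq_add_neg, div_mul_eq_mul_div, div_sub_div_same, le_div_iff₀ hpos]
    nlinarith
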